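/- For level p = 1 and even n ≥ 4, with θ_k = (2k−1)π/n, the total pseudospin expectation satisfies Σ_{k=1}^{n/2} F((γ),(β),θ_k) = (n/2)·sin(4β)·sin(4γ); for n = 2 it equals n·sin(4β)·sin(4γ). -/

import Mathlib

open Matrix Complex Real

noncomputable section

def σx : Matrix (Fin 2) (Fin 2) ℂ := !![0, 1; 1, 0]

def σz : Matrix (Fin 2) (Fin 2) ℂ := !![1, 0; 0, -1]

/-- The Bloch axis `n(θ) = cos θ · σz + sin θ · σx`. -/
def nvec (θ : ℝ) : Matrix (Fin 2) (Fin 2) ℂ :=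
  (Real.cos θ : ℂ) • σz + (Real.sin θ : ℂ) • σx

/-- `U_B(β) = exp(−2iβ·σz)`. -/
def UB (β : ℝ) : Matrix (Fin 2) (Fin 2) ℂ :=
  NormedSpace.exp ((-2 * β * Complex.I) • σz)

/-- `U_C(γ,θ) = exp(−2iγ·n(θ))`. -/
def UC (γ θ : ℝ) : Matrix (Fin 2) (Fin 2) ℂ :=
  NormedSpace.exp ((-2 * γ * Complex.I) • nvec θ)

/-- The level-`p` QAOA circuit `U(γ,β,θ) = U_B(β_p)·U_C(γ_p,θ)·⋯·U_B(β_1)·U_C(γ_1,θ)`. -/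
def Uqaoa (p : ℕ) (γ β : Fin p → ℝ) (θ : ℝ) : Matrix (Fin 2) (Fin 2) ℂ :=
  ((List.ofFn fun i : Fin p => UB (β i) * UC (γ i) θ).reverse).prod

/-- The pseudospin expectation `F(γ,β,θ) = Re tr[n(θ)·U·σz·U†]`. -/
def Fps (p : ℕ) (γ β : Fin p → ℝ) (θ : ℝ) : ℝ :=
  (Matrix.trace (nvec θ * Uqaoa p γ β θ * σz * (Uqaoa p γ β θ)ᴴ)).re

end
noncomputable section

/-! ### Auxiliary lemmas -/

lemma σz_diag : σz = Matrix.diagonal ![1, -1] := by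
  ext i j; fin_cases i <;> fin_cases j <;> simp [σz, Matrix.diagonal]

lemma UB_eq (β : ℝ) :
    UB β = !![(Real.cos (2*β) : ℂ) - (Real.sin (2*β) : ℂ) * Complex.I, 0;
              0, (Real.cos (2*β) : ℂ) + (Real.sin (2*β) : ℂ) * Complex.I] := by
  rw [UB, σz_diag, ← Matrix.diagonal_smul, Matrix.exp_diagonal]
  ext i j
  fin_cases i <;> fin_cases j <;>
    simp [Matrix.diagonal, Pi.exp_def, ← Complex.exp_eq_exp_ℂ]
  · rw [show (-(2 * (β:ℂ) * Complex.I)) = (-(2*β)) * Complex.I by ring,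
      Complex.exp_mul_I, Complex.cos_neg, Complex.sin_neg]
    ring
  · rw [show (2 * (β:ℂ) * Complex.I) = (2*β) * Complex.I by ring, Complex.exp_mul_I]

def Rm (t : ℝ) : Matrix (Fin 2) (Fin 2) ℂ :=
  !![(Real.cos t : ℂ), -(Real.sin t : ℂ); (Real.sin t : ℂ), (Real.cos t : ℂ)]

lemma Rm_mul_Rm_neg (t : ℝ) : Rm t * Rm (-t) = 1 := by
  have h := Real.sin_sq_add_cos_sq t
  have hC : (Real.sin t : ℂ)^2 + (Real.cos t : ℂ)^2 = 1 := by
    exact_mod_cast congrArg (Complex.ofReal) h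
  ext i j
  fin_cases i <;> fin_cases j <;>
    simp [Rm, Matrix.mul_fin_two, Real.cos_neg, Real.sin_neg, Matrix.one_apply,
      -Complex.ofReal_cos, -Complex.ofReal_sin] <;>
    first | ring1 | linear_combination hC | linear_combination -hC

lemma nvec_conj (θ : ℝ) : nvec θ = Rm (θ/2) * σz * Rm (-(θ/2)) := by
  have h1 := Real.cos_two_mul (θ/2)
  rw [show 2*(θ/2) = θ by ring] at h1
  have h2 := Real.sin_two_mul (θ/2)
  rw [show 2*(θ/2) = θ by ring] at h2
  have h3 := Real.sin_sq_add_cos_sq (θ/2)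
  have H1 : (Real.cos θ : ℂ) = 2*(Real.cos (θ/2):ℂ)^2 - 1 := by
    exact_mod_cast congrArg Complex.ofReal h1
  have H2 : (Real.sin θ : ℂ) = 2*(Real.sin (θ/2):ℂ)*(Real.cos (θ/2):ℂ) := by
    exact_mod_cast congrArg Complex.ofReal h2
  have H3 : (Real.sin (θ/2) : ℂ)^2 + (Real.cos (θ/2):ℂ)^2 = 1 := by
    exact_mod_cast congrArg Complex.ofReal h3
  ext i j
  fin_cases i <;> fin_cases j <;>
    simp [Rm, nvec, σz, σx, Matrix.mul_fin_two, Real.cos_neg, Real.sin_neg,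
      -Complex.ofReal_cos, -Complex.ofReal_sin] <;>
    first
      | ring1
      | linear_combination H2
      | linear_combination H1 + H3
      | linear_combination -H1 - H3
      | linear_combination -H2

lemma Rm_inv (t : ℝ) : (Rm t)⁻¹ = Rm (-t) :=
  Matrix.inv_eq_right_inv (Rm_mul_Rm_neg t)

lemma UC_conj (γ θ : ℝ) : UC γ θ = Rm (θ/2) * UB γ * Rm (-(θ/2)) := by
  have hu : IsUnit (Rm (θ/2)) := by
    refine ⟨⟨Rm (θ/2), Rm (-(θ/2)), Rm_mul_Rm_neg (θ/2), ?_⟩, rfl⟩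
    simpa using Rm_mul_Rm_neg (-(θ/2))
  rw [UC, nvec_conj θ, ← Rm_inv,
    show ((-2*(γ:ℂ)*Complex.I) • (Rm (θ/2) * σz * (Rm (θ/2))⁻¹))
        = Rm (θ/2) * ((-2*(γ:ℂ)*Complex.I) • σz) * (Rm (θ/2))⁻¹ by
      simp only [Matrix.smul_mul, Matrix.mul_smul],
    Matrix.exp_conj _ _ hu, Rm_inv]
  rfl

lemma UC_eq (γ θ : ℝ) : UC γ θ =
    !![(Real.cos (2*γ):ℂ) - (Real.sin (2*γ):ℂ) * Complex.I * (Real.cos θ:ℂ),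
       -((Real.sin (2*γ):ℂ) * Complex.I * (Real.sin θ:ℂ));
       -((Real.sin (2*γ):ℂ) * Complex.I * (Real.sin θ:ℂ)),
       (Real.cos (2*γ):ℂ) + (Real.sin (2*γ):ℂ) * Complex.I * (Real.cos θ:ℂ)] := by
  have h1 := Real.cos_two_mul (θ/2)
  rw [show 2*(θ/2) = θ by ring] at h1
  have h2 := Real.sin_two_mul (θ/2)
  rw [show 2*(θ/2) = θ by ring] at h2
  have h3 := Real.sin_sq_add_cos_sq (θ/2)
  have H1 : (Real.cos θ : ℂ) = 2*(Real.cos (θ/2):ℂ)^2 - 1 := by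
    exact_mod_cast congrArg Complex.ofReal h1
  have H2 : (Real.sin θ : ℂ) = 2*(Real.sin (θ/2):ℂ)*(Real.cos (θ/2):ℂ) := by
    exact_mod_cast congrArg Complex.ofReal h2
  have H3 : (Real.sin (θ/2) : ℂ)^2 + (Real.cos (θ/2):ℂ)^2 = 1 := by
    exact_mod_cast congrArg Complex.ofReal h3
  rw [UC_conj, UB_eq]
  ext i j
  fin_cases i <;> fin_cases j <;>
    simp [Rm, Matrix.mul_fin_two, Real.cos_neg, Real.sin_neg, -Complex.ofReal_cos,
      -Complex.ofReal_sin] <;>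
    first
      | ring1
      | linear_combination ((Real.cos (2*γ):ℂ) + (Real.sin (2*γ):ℂ)*Complex.I)*H3
          + (Real.sin (2*γ):ℂ)*Complex.I*H1
      | linear_combination ((Real.cos (2*γ):ℂ) - (Real.sin (2*γ):ℂ)*Complex.I)*H3
          - (Real.sin (2*γ):ℂ)*Complex.I*H1
      | linear_combination (Real.sin (2*γ):ℂ)*Complex.I*H2
      | linear_combination -((Real.sin (2*γ):ℂ)*Complex.I)*H2

lemma Uqaoa_one (γ β : Fin 1 → ℝ) (θ : ℝ) :
    Uqaoa 1 γ β θ = UB (β 0) * UC (γ 0) θ := by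
  simp [Uqaoa, List.ofFn_succ]

lemma nvec_explicit (θ : ℝ) :
    nvec θ = !![(Real.cos θ:ℂ), (Real.sin θ:ℂ); (Real.sin θ:ℂ), -(Real.cos θ:ℂ)] := by
  ext i j
  fin_cases i <;> fin_cases j <;> simp [nvec, σz, σx]

lemma conjT_fin_two (a b c d : ℂ) :
    (!![a,b;c,d])ᴴ = !![starRingEnd ℂ a, starRingEnd ℂ c; starRingEnd ℂ b, starRingEnd ℂ d] := by
  ext i j
  fin_cases i <;> fin_cases j <;> simp [Matrix.conjTranspose_apply]

/-- Closed form of the level-1 pseudospin expectation. -/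
lemma Fps_formula (γ β θ : ℝ) :
    Fps 1 (fun _ => γ) (fun _ => β) θ =
      Real.sin (4*β) * Real.sin (4*γ) * (2*Real.sin θ^2)
      + Real.cos θ * (2*(Real.cos (2*γ)^2 + Real.sin (2*γ)^2*(Real.cos θ^2 - Real.sin θ^2))
          + 4*Real.sin (2*γ)^2*Real.sin θ^2*Real.cos (4*β)) := by
  have e1 : Real.sin (4*β) = 2*Real.sin (2*β)*Real.cos (2*β) := by
    rw [show (4:ℝ)*β = 2*(2*β) by ring, Real.sin_two_mul]
  have e2 : Real.sin (4*γ) = 2*Real.sin (2*γ)*Real.cos (2*γ) := by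
    rw [show (4:ℝ)*γ = 2*(2*γ) by ring, Real.sin_two_mul]
  have e3 : Real.cos (4*β) = 2*Real.cos (2*β)^2 - 1 := by
    rw [show (4:ℝ)*β = 2*(2*β) by ring, Real.cos_two_mul]
  have hb := Real.sin_sq_add_cos_sq (2*β)
  rw [Fps, Uqaoa_one, e1, e2, e3]
  rw [UB_eq, UC_eq, nvec_explicit, σz]
  simp only [Matrix.mul_fin_two, conjT_fin_two, Matrix.trace_fin_two_of, map_add, map_sub,
    _root_.map_mul, map_neg, map_zero, _root_.map_one, Complex.conj_ofReal, Complex.conj_I]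
  simp only [Complex.add_re, Complex.sub_re, Complex.neg_re, Complex.mul_re, Complex.mul_im,
    Complex.add_im, Complex.sub_im, Complex.neg_im, Complex.I_re, Complex.I_im,
    Complex.ofReal_re, Complex.ofReal_im, Complex.zero_re, Complex.zero_im,
    Complex.one_re, Complex.one_im]
  linear_combination (-6*Real.sin (2*γ)^2*Real.cos θ*Real.sin θ^2
    + 2*Real.sin (2*γ)^2*Real.cos θ^3 + 2*Real.cos (2*γ)^2*Real.cos θ) * hb

lemma sum_cos_eq_zero (n : ℕ) (hn : Even n) (h4 : 4 ≤ n) :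
    ∑ k ∈ Finset.Icc 1 (n / 2), Real.cos (2 * ((2 * (k : ℝ) - 1) * Real.pi / n)) = 0 := by
  obtain ⟨m, hm⟩ := hn
  have hm2 : n = 2 * m := by omega
  have hmn : n / 2 = m := by omega
  have hm1 : 1 ≤ m := by omega
  have hn0 : (0:ℝ) < (n:ℝ) := by positivity
  have hnR : (n:ℝ) = 2 * m := by exact_mod_cast hm2
  have hπ := Real.pi_pos
  set q : ℂ := Complex.exp ((4 * Real.pi / n : ℝ) * Complex.I) with hq
  have hq1 : q ≠ 1 := by
    intro h
    rw [Complex.exp_eq_one_iff] at h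
    obtain ⟨k, hk⟩ := h
    have him := congrArg Complex.im hk
    simp [Complex.mul_im] at him
    have h1 : (0:ℝ) < 4 * Real.pi / n := by positivity
    have h2 : 4 * Real.pi / (n:ℝ) < 2 * Real.pi := by
      rw [div_lt_iff₀ hn0]
      have : (4:ℝ) ≤ n := by exact_mod_cast h4
      nlinarith
    have hk0 : (0:ℝ) < (k:ℝ) := by nlinarith
    have hk1 : (k:ℝ) < 1 := by nlinarith
    have hk0' : (0:ℤ) < k := by exact_mod_cast hk0
    have hk1' : (k:ℤ) < 1 := by exact_mod_cast hk1
    omega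
  have hqm : q ^ m = 1 := by
    rw [hq, ← Complex.exp_nat_mul]
    have : (m:ℂ) * (((4 * Real.pi / n : ℝ) : ℂ) * Complex.I) = 2 * Real.pi * Complex.I := by
      have hr : (m:ℝ) * (4 * Real.pi / n) = 2 * Real.pi := by
        rw [hnR]; field_simp; ring
      calc (m:ℂ) * (((4 * Real.pi / n : ℝ) : ℂ) * Complex.I)
          = ((m * (4 * Real.pi / n) : ℝ) : ℂ) * Complex.I := by push_cast; ring
        _ = 2 * Real.pi * Complex.I := by rw [hr]; push_cast; ring
    rw [this, Complex.exp_two_pi_mul_I]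
  have key : ∑ k ∈ Finset.Icc 1 m, Complex.exp
      ((2 * ((2 * (k : ℝ) - 1) * Real.pi / n) : ℝ) * Complex.I) = 0 := by
    rw [← Finset.Ico_add_one_right_eq_Icc, Finset.sum_Ico_eq_sum_range]
    have hms : m + 1 - 1 = m := by omega
    rw [hms]
    have hterm : ∀ i : ℕ, Complex.exp ((2 * ((2 * ((1 + i : ℕ) : ℝ) - 1) * Real.pi / n) : ℝ) * Complex.I)
        = Complex.exp ((2 * Real.pi / n : ℝ) * Complex.I) * q ^ i := by
      intro i
      rw [hq, ← Complex.exp_nat_mul, ← Complex.exp_add]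
      congr 1
      push_cast
      ring
    rw [Finset.sum_congr rfl fun i _ => hterm i, ← Finset.mul_sum,
      geom_sum_eq hq1, hqm]
    simp
  have hre := congrArg Complex.re key
  rw [Complex.re_sum, Complex.zero_re] at hre
  rw [hmn, ← hre]
  refine Finset.sum_congr rfl fun k hk => ?_
  rw [Complex.exp_ofReal_mul_I_re]

lemma sum_sin_sq (n : ℕ) (hn : Even n) (h4 : 4 ≤ n) :
    ∑ k ∈ Finset.Icc 1 (n / 2), Real.sin ((2 * (k : ℝ) - 1) * Real.pi / n) ^ 2
      = (n / 2 : ℕ) / 2 := by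
  have hc := sum_cos_eq_zero n hn h4
  have : ∀ k : ℕ, Real.sin ((2 * (k : ℝ) - 1) * Real.pi / n) ^ 2
      = 1/2 - Real.cos (2 * ((2 * (k : ℝ) - 1) * Real.pi / n)) / 2 := fun k =>
    Real.sin_sq_eq_half_sub _
  rw [Finset.sum_congr rfl fun k _ => this k, Finset.sum_sub_distrib, Finset.sum_const,
    Nat.card_Icc, ← Finset.sum_div, hc]
  simp
  ring

/-- For level `p = 1` and even `n ≥ 4`, with `θ_k = (2k−1)π/n`, the total pseudospin
expectation is `(n/2)·sin(4β)·sin(4γ)`; for `n = 2` it equals `n·sin(4β)·sin(4γ)`. -/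
theorem qaoa1_ring_total_expectation (γ β : ℝ) :
    (∀ n : ℕ, Even n → 4 ≤ n →
      ∑ k ∈ Finset.Icc 1 (n / 2),
          Fps 1 (fun _ => γ) (fun _ => β) ((2 * (k : ℝ) - 1) * Real.pi / n)
        = ((n : ℝ) / 2) * (Real.sin (4 * β) * Real.sin (4 * γ))) ∧
    ∑ k ∈ Finset.Icc 1 (2 / 2 : ℕ),
        Fps 1 (fun _ => γ) (fun _ => β) ((2 * (k : ℝ) - 1) * Real.pi / 2)
      = (2 : ℝ) * (Real.sin (4 * β) * Real.sin (4 * γ)) := by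
  constructor
  · intro n hn h4
    obtain ⟨m, hm⟩ := hn
    have hm2 : n = 2 * m := by omega
    have hmn : n / 2 = m := by omega
    have hm1 : 1 ≤ m := by omega
    have hnR : (n:ℝ) = 2 * m := by exact_mod_cast hm2
    have hn0 : (0:ℝ) < (n:ℝ) := by
      have : (4:ℝ) ≤ n := by exact_mod_cast h4
      linarith
    simp_rw [Fps_formula]
    rw [Finset.sum_add_distrib]
    have hsin := sum_sin_sq n ⟨m, hm⟩ h4
    have hT : ∑ k ∈ Finset.Icc 1 (n / 2), Real.cos ((2 * (k : ℝ) - 1) * Real.pi / n) *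
        (2*(Real.cos (2*γ)^2 + Real.sin (2*γ)^2*(Real.cos ((2 * (k : ℝ) - 1) * Real.pi / n)^2
          - Real.sin ((2 * (k : ℝ) - 1) * Real.pi / n)^2))
          + 4*Real.sin (2*γ)^2*Real.sin ((2 * (k : ℝ) - 1) * Real.pi / n)^2*Real.cos (4*β)) = 0 := by
      rw [hmn]
      refine Finset.sum_involution (fun a _ => m + 1 - a) ?_ ?_ ?_ ?_
      · intro a ha
        rw [Finset.mem_Icc] at ha
        have hθ : (2 * ((m + 1 - a : ℕ) : ℝ) - 1) * Real.pi / n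
            = Real.pi - (2 * (a : ℝ) - 1) * Real.pi / n := by
          rw [Nat.cast_sub (by omega : a ≤ m + 1)]
          rw [hnR]
          have hm0 : (m:ℝ) ≠ 0 := by
            have : 1 ≤ (m:ℝ) := by exact_mod_cast hm1
            linarith
          field_simp
          push_cast
          ring
        rw [hθ, Real.cos_pi_sub, Real.sin_pi_sub]
        ring
      · intro a ha hfa
        rw [Finset.mem_Icc] at ha
        intro heq
        apply hfa
        have heq' : m + 1 - a = a := heq
        have h2a : 2 * a = m + 1 := by omega
        have hθπ : (2 * (a : ℝ) - 1) * Real.pi / n = Real.pi / 2 := by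
          have h2aR : 2 * (a:ℝ) = (m:ℝ) + 1 := by exact_mod_cast h2a
          rw [hnR]
          have hm0 : (m:ℝ) ≠ 0 := by
            have : 1 ≤ (m:ℝ) := by exact_mod_cast hm1
            linarith
          field_simp
          linear_combination h2aR
        rw [hθπ, Real.cos_pi_div_two]
        ring
      · intro a ha
        simp only [Finset.mem_Icc] at ha
        show m + 1 - a ∈ Finset.Icc 1 m
        simp only [Finset.mem_Icc]
        omega
      · intro a ha
        simp only [Finset.mem_Icc] at ha
        show m + 1 - (m + 1 - a) = a
        omega
    rw [hT, add_zero]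
    have h2 : ∑ k ∈ Finset.Icc 1 (n / 2),
        Real.sin (4*β) * Real.sin (4*γ) * (2 * Real.sin ((2 * (k : ℝ) - 1) * Real.pi / n) ^ 2)
        = Real.sin (4*β) * Real.sin (4*γ) * (2 * ((n / 2 : ℕ) / 2 : ℝ)) := by
      rw [← Finset.mul_sum, ← Finset.mul_sum, hsin]
    rw [h2]
    have hcast : ((n / 2 : ℕ) : ℝ) = (n : ℝ) / 2 := by
      rw [hmn, hnR]; ring
    rw [hcast]
    ring
  · rw [show (2/2 : ℕ) = 1 from rfl, Finset.Icc_self, Finset.sum_singleton]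
    rw [show (2 * ((1:ℕ) : ℝ) - 1) * Real.pi / 2 = Real.pi / 2 by push_cast; ring]
    rw [Fps_formula, Real.sin_pi_div_two, Real.cos_pi_div_two]
    ring
end
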